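/- The Ursell function k := ln*(e^{−βE}) has the representation k(ω) = Σ_{G connected graph on ω} ∏_{{x,y} ∈ G} (e^{−βφ(x,y)} − 1) for every nonempty finite ω ⊆ α, and k(∅) = 0. Equivalently, exp* k = e^{−βE}, i.e. e^{−βE(ω)} = Σ_{n≥0} (1/n!) Σ_{(ω₁,…,ω_n) partition of ω into n nonempty parts} k(ω₁)⋯k(ω_n). -/

import Mathlib

open Finset

noncomputable section

variable {α : Type*} [DecidableEq α]

/-- The convolution `(ψ₁ * ψ₂)(ω) := Σ_{ω₁ ⊆ ω} ψ₁(ω₁)·ψ₂(ω \ ω₁)`. -/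
def starMul (ψ₁ ψ₂ : Finset α → ℝ) : Finset α → ℝ :=
  fun ω => ∑ ω₁ ∈ ω.powerset, ψ₁ ω₁ * ψ₂ (ω \ ω₁)

/-- The unit `1*` of the convolution algebra. -/
def starUnit : Finset α → ℝ := fun ω => if ω = ∅ then 1 else 0

/-- Convolution powers `ψ^{*n}`. -/
def starPow (ψ : Finset α → ℝ) : ℕ → Finset α → ℝ
  | 0 => starUnit
  | n + 1 => starMul ψ (starPow ψ n)

/-- `exp* ψ := Σ_{n≥0} ψ^{*n}/n!`; for `ψ(∅) = 0` this is a pointwise finite sum since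
`ψ^{*n}(ω) = 0` whenever `n > |ω|`. -/
def expStar (ψ : Finset α → ℝ) : Finset α → ℝ :=
  fun ω => ∑ n ∈ Finset.range (ω.card + 1), (n.factorial : ℝ)⁻¹ * starPow ψ n ω

/-- `ln*(1* + ψ) := Σ_{n≥1} ((−1)^{n−1}/n)·ψ^{*n}`, applied to `F = 1* + ψ`. -/
def lnStar (F : Finset α → ℝ) : Finset α → ℝ :=
  fun ω => ∑ n ∈ Finset.Icc 1 ω.card,
    ((-1 : ℝ) ^ (n - 1) / n) * starPow (fun ζ => F ζ - starUnit ζ) n ω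

/-- `(D_{ω'}ψ)(ω) := ψ(ω ∪ ω')` if `ω ∩ ω' = ∅` and `0` otherwise. -/
def Dop (ω' : Finset α) (ψ : Finset α → ℝ) : Finset α → ℝ :=
  fun ω => if Disjoint ω ω' then ψ (ω ∪ ω') else 0

/-- The energy `E(ω) := Σ_{{x,y} ⊆ ω, x ≠ y} φ(x,y)`, each unordered pair counted once. -/
def energy (φ : α → α → ℝ) (hφ : ∀ x y, φ x y = φ y x) (ω : Finset α) : ℝ :=
  ∑ e ∈ ω.sym2.filter (fun e => ¬ e.IsDiag), Sym2.lift ⟨φ, hφ⟩ e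

/-- The Gibbs factor `ω ↦ e^{-βE(ω)}`. -/
def gibbs (β : ℝ) (φ : α → α → ℝ) (hφ : ∀ x y, φ x y = φ y x) : Finset α → ℝ :=
  fun ω => Real.exp (-β * energy φ hφ ω)

/-- Graphs on `ω`: sets of unordered pairs of distinct elements of `ω`. -/
def graphsOn (ω : Finset α) : Finset (Finset (Sym2 α)) :=
  ω.sym2.powerset.filter fun G => ∀ e ∈ G, ¬ e.IsDiag

/-- The simple graph with vertex set `ω` and edge set `G`. -/
def toGraph (ω : Finset α) (G : Finset (Sym2 α)) : SimpleGraph {x // x ∈ ω} :=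
  SimpleGraph.fromEdgeSet {e | e.map Subtype.val ∈ G}

open Classical in
/-- The Ursell function `k(ω) = Σ_{G connected graph on ω} ∏_{{x,y} ∈ G} (e^{−βφ(x,y)} − 1)`
(`= 0` for `ω = ∅`, since there is no connected graph on an empty vertex set). -/
def ursell (β : ℝ) (φ : α → α → ℝ) (hφ : ∀ x y, φ x y = φ y x) (ω : Finset α) : ℝ :=
  ∑ G ∈ (graphsOn ω).filter (fun G => (toGraph ω G).Connected),
    ∏ e ∈ G, (Real.exp (-β * Sym2.lift ⟨φ, hφ⟩ e) - 1)

/-- `k̄(ω, ζ) := (exp*(−k) * D_ω(e^{−βE}))(ζ)`. -/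
def kbar (β : ℝ) (φ : α → α → ℝ) (hφ : ∀ x y, φ x y = φ y x) (ω ζ : Finset α) : ℝ :=
  starMul (expStar fun η => - ursell β φ hφ η) (Dop ω (gibbs β φ hφ)) ζ

open Classical in
/-- Trees on `ω`: connected graphs on `ω` without cycles. -/
def treesOn (ω : Finset α) : Finset (Finset (Sym2 α)) :=
  (graphsOn ω).filter fun T => (toGraph ω T).IsTree

open Classical in
/-- `Q({x}, ζ) := e^{2βB(|ζ|+1)} Σ_{T tree on {x}∪ζ} ∏_{{y,y'} ∈ T} |e^{−βφ(y,y')} − 1|`,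
and `Q({x}, ∅) := e^{2βB}`. -/
def Qone (β B : ℝ) (φ : α → α → ℝ) (hφ : ∀ x y, φ x y = φ y x) (x : α) (ζ : Finset α) : ℝ :=
  if ζ = ∅ then Real.exp (2 * β * B)
  else Real.exp (2 * β * B * (ζ.card + 1)) *
    ∑ T ∈ treesOn (insert x ζ), ∏ e ∈ T, |Real.exp (-β * Sym2.lift ⟨φ, hφ⟩ e) - 1|

open Classical in
/-- `Q(ω, ζ) := Σ Q({x₁}, ζ₁)⋯Q({x_l}, ζ_l)`, the sum over ordered tuples of pairwise disjoint
(possibly empty) sets `(ζ_x)_{x ∈ ω}` with union `ζ`; `Q(∅, ζ) := 1*(ζ)`. -/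
def Qfun (β B : ℝ) (φ : α → α → ℝ) (hφ : ∀ x y, φ x y = φ y x) (ω ζ : Finset α) : ℝ :=
  if ω = ∅ then (if ζ = ∅ then 1 else 0)
  else ∑ g ∈ (Fintype.piFinset fun _ : {x // x ∈ ω} => ζ.powerset).filter
        (fun g => (∀ i j, i ≠ j → Disjoint (g i) (g j)) ∧ Finset.univ.sup g = ζ),
      ∏ x : {x // x ∈ ω}, Qone β B φ hφ (x : α) (g x)


section AlgebraSec
variable {α : Type*} [DecidableEq α]

lemma starMul_comm (f g : Finset α → ℝ) : starMul f g = starMul g f := by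
  funext ω
  unfold starMul
  refine Finset.sum_nbij' (fun A => ω \ A) (fun A => ω \ A) ?_ ?_ ?_ ?_ ?_ <;>
    intro A hA <;> simp only [Finset.mem_powerset] at *
  · exact Finset.sdiff_subset
  · exact Finset.sdiff_subset
  · exact Finset.sdiff_sdiff_eq_self hA
  · exact Finset.sdiff_sdiff_eq_self hA
  · rw [Finset.sdiff_sdiff_eq_self hA, mul_comm]

lemma starMul_assoc (f g h : Finset α → ℝ) :
    starMul (starMul f g) h = starMul f (starMul g h) := by
  funext ω
  unfold starMul
  simp only [Finset.sum_mul, Finset.mul_sum]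
  rw [Finset.sum_sigma', Finset.sum_sigma']
  refine Finset.sum_bij' (fun p _ => ⟨p.2, p.1 \ p.2⟩) (fun p _ => ⟨p.1 ∪ p.2, p.1⟩)
      ?_ ?_ ?_ ?_ ?_
  · rintro ⟨A, B⟩ hp
    simp only [Finset.mem_sigma, Finset.mem_powerset] at hp ⊢
    exact ⟨hp.2.trans hp.1, Finset.sdiff_subset_sdiff hp.1 (Finset.Subset.refl B)⟩
  · rintro ⟨B, C⟩ hp
    simp only [Finset.mem_sigma, Finset.mem_powerset] at hp ⊢
    exact ⟨Finset.union_subset hp.1 (hp.2.trans Finset.sdiff_subset), Finset.subset_union_left⟩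
  · rintro ⟨A, B⟩ hp
    simp only [Finset.mem_sigma, Finset.mem_powerset] at hp
    simp [Finset.union_sdiff_of_subset hp.2]
  · rintro ⟨B, C⟩ hp
    simp only [Finset.mem_sigma, Finset.mem_powerset] at hp
    have : Disjoint B C := Finset.disjoint_of_subset_right hp.2 Finset.sdiff_disjoint.symm
    simp [Finset.union_sdiff_cancel_left this]
  · rintro ⟨A, B⟩ hp
    simp only [Finset.mem_sigma, Finset.mem_powerset] at hp
    have h1 : (ω \ B) \ (A \ B) = ω \ A := by
      rw [sdiff_sdiff_left]
      have : B ⊔ A \ B = A := by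
        rw [Finset.sup_eq_union]; exact Finset.union_sdiff_of_subset hp.2
      rw [this]
    simp only [h1]; ring

lemma starMul_one (f : Finset α → ℝ) : starMul starUnit f = f := by
  funext ω
  unfold starMul
  rw [Finset.sum_eq_single ∅]
  · simp [starUnit]
  · intro b _ hb; simp [starUnit, hb]
  · intro h; simp at h

lemma starMul_add (f g h : Finset α → ℝ) :
    starMul f (fun ω => g ω + h ω) = fun ω => starMul f g ω + starMul f h ω := by
  funext ω
  unfold starMul
  simp only [← Finset.sum_add_distrib]
  exact Finset.sum_congr rfl fun x _ => by ring

/-- Type synonym carrying the convolution ring structure. -/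
def FA (α : Type*) [DecidableEq α] := Finset α → ℝ

namespace FA

instance : AddCommGroup (FA α) := Pi.addCommGroup
instance : Module ℝ (FA α) := Pi.module _ _ _

instance : CommRing (FA α) :=
  { (inferInstance : AddCommGroup (FA α)) with
    mul := starMul
    one := starUnit
    mul_assoc := starMul_assoc
    one_mul := starMul_one
    mul_one := fun f => by show starMul f starUnit = f; exact (starMul_comm f starUnit).trans (starMul_one f)
    left_distrib := fun f g h => starMul_add f g h
    right_distrib := fun f g h => by
      show starMul _ _ = _
      refine (starMul_comm (f + g : FA α) h).trans ?_
      refine (starMul_add h f g).trans ?_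
      funext ω
      show starMul h f ω + starMul h g ω = starMul f h ω + starMul g h ω
      rw [starMul_comm h f, starMul_comm h g]
    zero_mul := fun f => by
      show starMul _ _ = _
      funext ω; unfold starMul; simp [show ∀ ζ, (0 : FA α) ζ = 0 from fun _ => rfl]
    mul_zero := fun f => by
      show starMul _ _ = _
      refine (starMul_comm f (0 : FA α)).trans ?_
      funext ω; unfold starMul; simp [show ∀ ζ, (0 : FA α) ζ = 0 from fun _ => rfl]
    mul_comm := starMul_comm }

lemma mul_apply (f g : FA α) (ω : Finset α) :
    (f * g) ω = ∑ ω₁ ∈ ω.powerset, f ω₁ * g (ω \ ω₁) := rfl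
lemma add_apply (f g : FA α) (ω : Finset α) : (f + g) ω = f ω + g ω := rfl
lemma sub_apply (f g : FA α) (ω : Finset α) : (f - g) ω = f ω - g ω := rfl
lemma zero_apply (ω : Finset α) : (0 : FA α) ω = 0 := rfl
lemma smul_apply (r : ℝ) (f : FA α) (ω : Finset α) : (r • f) ω = r * f ω := rfl
lemma one_apply (ω : Finset α) : (1 : FA α) ω = if ω = ∅ then 1 else 0 := rfl

lemma sum_apply {ι : Type*} (s : Finset ι) (f : ι → FA α) (ω : Finset α) :
    (∑ i ∈ s, f i) ω = ∑ i ∈ s, f i ω := by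
  induction s using Finset.cons_induction with
  | empty => rfl
  | cons a s ha ih => rw [Finset.sum_cons, Finset.sum_cons, add_apply, ih]

instance : Algebra ℝ (FA α) :=
  Algebra.ofModule
    (fun r x y => by
      funext ω
      simp only [mul_apply, smul_apply, Finset.mul_sum]
      exact Finset.sum_congr rfl fun z _ => by ring)
    (fun r x y => by
      funext ω
      simp only [mul_apply, smul_apply, Finset.mul_sum]
      exact Finset.sum_congr rfl fun z _ => by ring)

lemma starPow_eq (ψ : FA α) (n : ℕ) : starPow ψ n = ψ ^ n := by
  induction n with
  | zero => rw [pow_zero]; rfl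
  | succ n ih =>
    show starMul ψ (starPow ψ n) = _
    rw [ih, pow_succ, mul_comm]; rfl

end FA

lemma starPow_eq_zero (ψ : Finset α → ℝ) (hψ : ψ ∅ = 0) :
    ∀ n (ω : Finset α), ω.card < n → starPow ψ n ω = 0 := by
  intro n
  induction n with
  | zero => intro ω h; omega
  | succ n ih =>
    intro ω h
    show ∑ ω₁ ∈ ω.powerset, ψ ω₁ * starPow ψ n (ω \ ω₁) = 0
    refine Finset.sum_eq_zero fun ω₁ h₁ => ?_
    rw [Finset.mem_powerset] at h₁
    rcases eq_or_ne ω₁ ∅ with rfl | hne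
    · simp [hψ]
    · have hc : (ω \ ω₁).card < n := by
        have h2 : 1 ≤ ω₁.card := Finset.card_pos.mpr (Finset.nonempty_iff_ne_empty.mpr hne)
        have := Finset.card_le_card h₁
        rw [Finset.card_sdiff_of_subset h₁]; omega
      rw [ih _ hc, mul_zero]

lemma starPow_congr {f g : Finset α → ℝ} {ω : Finset α} (h : ∀ ζ ⊆ ω, f ζ = g ζ) :
    ∀ n, ∀ ζ ⊆ ω, starPow f n ζ = starPow g n ζ := by
  intro n
  induction n with
  | zero => intro ζ _; rfl
  | succ n ih =>
    intro ζ hζ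
    show ∑ ω₁ ∈ ζ.powerset, f ω₁ * starPow f n (ζ \ ω₁)
       = ∑ ω₁ ∈ ζ.powerset, g ω₁ * starPow g n (ζ \ ω₁)
    refine Finset.sum_congr rfl fun ω₁ h₁ => ?_
    rw [Finset.mem_powerset] at h₁
    rw [h _ (h₁.trans hζ), ih _ (Finset.sdiff_subset.trans hζ)]

end AlgebraSec
section PolySec
open Polynomial

/-- Truncated exponential polynomial. -/
noncomputable def EP (N : ℕ) : ℝ[X] := ∑ n ∈ Finset.range (N + 1), C ((n.factorial : ℝ)⁻¹) * X ^ n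

/-- Truncated logarithm polynomial. -/
noncomputable def LP (N : ℕ) : ℝ[X] := ∑ n ∈ Finset.Icc 1 N, C ((-1 : ℝ) ^ (n - 1) / n) * X ^ n

lemma EP_coeff_zero (N : ℕ) : (EP N).coeff 0 = 1 := by
  unfold EP
  rw [finset_sum_coeff]
  rw [Finset.sum_eq_single 0]
  · simp
  · intro n _ hn; simp [coeff_X_pow, hn, Ne.symm hn]
  · intro h; simp at h

lemma X_dvd_EP_sub_one (N : ℕ) : X ∣ EP N - 1 := by
  rw [X_dvd_iff, coeff_sub, EP_coeff_zero]; simp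

lemma LP_eval_zero (N : ℕ) : (LP N).eval 0 = 0 := by
  unfold LP
  rw [eval_finset_sum]
  refine Finset.sum_eq_zero fun n hn => ?_
  rw [Finset.mem_Icc] at hn
  simp [zero_pow (by omega : n ≠ 0)]

lemma derivative_EP (N : ℕ) : derivative (EP N) = EP N - C ((N.factorial : ℝ)⁻¹) * X ^ N := by
  unfold EP
  rw [map_sum]
  rw [Finset.sum_range_succ' (fun n => derivative (C ((n.factorial : ℝ)⁻¹) * X ^ n)) N]
  rw [Finset.sum_range_succ (fun n => C ((n.factorial : ℝ)⁻¹) * X ^ n) N]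
  have hlast : derivative (C (((Nat.factorial 0 : ℕ) : ℝ)⁻¹) * X ^ 0) = 0 := by
    simp
  rw [hlast, add_zero, add_sub_cancel_right]
  refine Finset.sum_congr rfl fun i _ => ?_
  rw [derivative_C_mul_X_pow]
  have h0 : (((i+1).factorial : ℝ)) = ((i : ℝ) + 1) * (i.factorial : ℝ) := by
    rw [Nat.factorial_succ]; push_cast; ring
  have h1 : ((i+1).factorial : ℝ)⁻¹ * ((i+1 : ℕ) : ℝ) = (i.factorial : ℝ)⁻¹ := by
    rw [h0, mul_inv]
    have h2 : ((i : ℝ) + 1) ≠ 0 := by positivity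
    have h3 : ((i.factorial : ℝ)) ≠ 0 := Nat.cast_ne_zero.mpr (Nat.factorial_ne_zero i)
    push_cast
    field_simp
  rw [Nat.add_sub_cancel, h1]

lemma derivative_LP_mul (N : ℕ) : derivative (LP N) * (X + 1) = 1 - (-X : ℝ[X]) ^ N := by
  unfold LP
  rw [map_sum]
  have h1 : ∀ n ∈ Finset.Icc 1 N, derivative (C ((-1 : ℝ) ^ (n - 1) / n) * X ^ n)
      = (-X : ℝ[X]) ^ (n - 1) := by
    intro n hn
    rw [Finset.mem_Icc] at hn
    rw [derivative_C_mul_X_pow]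
    have hn0 : ((n : ℝ)) ≠ 0 := Nat.cast_ne_zero.mpr (by omega)
    have h2 : ((-1 : ℝ) ^ (n - 1) / n * n) = (-1 : ℝ) ^ (n - 1) := by field_simp
    have h3 : (C ((-1 : ℝ) ^ (n-1)) : ℝ[X]) = (-1 : ℝ[X]) ^ (n-1) := by
      rw [map_pow, map_neg, C_1]
    rw [h2, neg_pow (X : ℝ[X]) (n-1), h3]
  rw [Finset.sum_congr rfl h1]
  have h2 : ∑ n ∈ Finset.Icc 1 N, (-X : ℝ[X]) ^ (n - 1) = ∑ m ∈ Finset.range N, (-X : ℝ[X]) ^ m := by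
    refine Finset.sum_nbij' (fun n => n - 1) (fun m => m + 1) ?_ ?_ ?_ ?_ ?_
    · intro a ha; simp only [Finset.mem_Icc, Finset.mem_range] at *; omega
    · intro a ha; simp only [Finset.mem_Icc, Finset.mem_range] at *; omega
    · intro a ha; simp only [Finset.mem_Icc] at ha; show a - 1 + 1 = a; omega
    · intro a ha; show a + 1 - 1 = a; omega
    · intro a ha; rfl
  rw [h2]
  have h3 := geom_sum_mul (-X : ℝ[X]) N
  have h4 : (X + 1 : ℝ[X]) = -(-X - 1) := by ring
  rw [h4, mul_neg, h3]
  ring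

lemma mainPoly (N : ℕ) : (X : ℝ[X]) ^ (N + 1) ∣ (LP N).comp (EP N - 1) - X := by
  set y : ℝ[X] := EP N - 1 with hy
  have hXy : X ∣ y := X_dvd_EP_sub_one N
  set P : ℝ[X] := (LP N).comp y with hP
  have hy' : derivative y = EP N - C ((N.factorial : ℝ)⁻¹) * X ^ N := by
    rw [hy, derivative_sub, derivative_one, sub_zero, derivative_EP]
  have hcomp : (derivative (LP N)).comp y * EP N = 1 - (-y) ^ N := by
    have h := congrArg (fun p => p.comp y) (derivative_LP_mul N)
    simp only [mul_comp, add_comp, X_comp, one_comp, sub_comp, pow_comp, neg_comp] at h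
    have hyu : y + 1 = EP N := by rw [hy]; ring
    rw [hyu] at h
    exact h
  have hDP : derivative P * EP N
      = (EP N - C ((N.factorial : ℝ)⁻¹) * X ^ N) * (1 - (-y) ^ N) := by
    rw [hP, derivative_comp]
    calc derivative y * (derivative (LP N)).comp y * EP N
        = derivative y * ((derivative (LP N)).comp y * EP N) := by ring
      _ = derivative y * (1 - (-y) ^ N) := by rw [hcomp]
      _ = _ := by rw [hy']
  have hdvd1 : (X : ℝ[X]) ^ N ∣ (derivative P - 1) * EP N := by
    have heq : (derivative P - 1) * EP N
        = - (C ((N.factorial : ℝ)⁻¹) * X ^ N) * (1 - (-y) ^ N) - EP N * (-y) ^ N := by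
      linear_combination hDP
    rw [heq]
    have hyN : (X : ℝ[X]) ^ N ∣ (-y) ^ N := by
      have : (X : ℝ[X]) ∣ -y := (dvd_neg).mpr hXy
      exact pow_dvd_pow_of_dvd this N
    refine dvd_sub ?_ (hyN.mul_left _)
    exact Dvd.dvd.mul_right ((dvd_neg).mpr (dvd_mul_left _ _)) _
  have hnotdvd : ¬ (X : ℝ[X]) ∣ EP N := by
    rw [X_dvd_iff, EP_coeff_zero]; norm_num
  have hdvd2 : (X : ℝ[X]) ^ N ∣ derivative P - 1 :=
    (prime_X).pow_dvd_of_dvd_mul_right N hnotdvd hdvd1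
  rw [X_pow_dvd_iff]
  intro d hd
  rcases Nat.eq_zero_or_pos d with rfl | hdpos
  · rw [coeff_sub, coeff_zero_eq_eval_zero, coeff_X_zero, hP, eval_comp]
    have hy0 : y.eval 0 = 0 := by
      have h := X_dvd_iff.mp hXy
      rwa [coeff_zero_eq_eval_zero] at h
    rw [hy0, LP_eval_zero, sub_zero]
  · obtain ⟨k, rfl⟩ : ∃ k, d = k + 1 := ⟨d - 1, by omega⟩
    have hk : k < N := by omega
    have hco : (derivative P - 1).coeff k = 0 := X_pow_dvd_iff.mp hdvd2 k hk
    rw [coeff_sub, coeff_derivative, coeff_one] at hco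
    rw [coeff_sub]
    rcases eq_or_ne k 0 with rfl | hk0
    · rw [if_pos rfl] at hco
      have h1 : P.coeff 1 = 1 := by
        have h2 : P.coeff (0+1) * ((0:ℕ) + 1 : ℝ) - 1 = 0 := by exact_mod_cast hco
        push_cast at h2
        linarith
      have h2 : (X : ℝ[X]).coeff (0+1) = 1 := coeff_X_one
      rw [h2]
      show P.coeff 1 - 1 = 0
      rw [h1]; ring
    · rw [if_neg hk0, sub_zero] at hco
      have hne : ((k : ℝ) + 1) ≠ 0 := by positivity
      have h5 : P.coeff (k+1) = 0 := by
        rcases mul_eq_zero.mp hco with h | h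
        · exact h
        · exact absurd h hne
      have h6 : (X : ℝ[X]).coeff (k+1) = 0 := by
        rw [coeff_X]
        rw [if_neg (by omega : ¬ 1 = k + 1)]
      rw [h5, h6]; ring
end PolySec
section LogExpSec
open Polynomial
variable {α : Type*} [DecidableEq α]

lemma FA.aeval_sum_apply (f : FA α) (c : ℕ → ℝ) (s : Finset ℕ) (ζ : Finset α) :
    (aeval f (∑ n ∈ s, C (c n) * X ^ n) : FA α) ζ = ∑ n ∈ s, c n * (f ^ n) ζ := by
  rw [map_sum, FA.sum_apply]
  refine Finset.sum_congr rfl fun n _ => ?_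
  rw [map_mul, aeval_C, map_pow, aeval_X, ← Algebra.smul_def, FA.smul_apply]

theorem lnStar_expStar (ψ : Finset α → ℝ) (hψ : ψ ∅ = 0) (ω : Finset α) :
    lnStar (expStar ψ) ω = ψ ω := by
  set N := ω.card with hN
  let x : FA α := ψ
  let y : FA α := aeval x (EP N) - 1
  have hxpow : ∀ (n : ℕ) (ζ : Finset α), (x ^ n) ζ = starPow ψ n ζ := by
    intro n ζ
    rw [← FA.starPow_eq]
  have key : ∀ ζ ⊆ ω, (expStar ψ ζ - starUnit ζ) = y ζ := by
    intro ζ hζ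
    have hy : y ζ = (aeval x (EP N) : FA α) ζ - starUnit ζ := by
      show (aeval x (EP N) - 1 : FA α) ζ = _
      rw [FA.sub_apply]; rfl
    rw [hy]
    congr 1
    unfold EP
    rw [FA.aeval_sum_apply]
    simp only [hxpow]
    unfold expStar
    rw [Finset.sum_subset (Finset.range_subset_range.mpr
      (by have := Finset.card_le_card hζ; omega : ζ.card + 1 ≤ N + 1))]
    intro n hn hn2
    rw [Finset.mem_range] at hn hn2
    rw [starPow_eq_zero ψ hψ n ζ (by omega), mul_zero]
  have step1 : lnStar (expStar ψ) ω
      = ∑ n ∈ Finset.Icc 1 N, ((-1 : ℝ) ^ (n - 1) / n) * (y ^ n) ω := by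
    unfold lnStar
    refine Finset.sum_congr rfl fun n _ => ?_
    congr 1
    rw [starPow_congr (fun ζ hζ => key ζ hζ) n ω (Finset.Subset.refl ω)]
    rw [FA.starPow_eq]
  rw [step1]
  have step2 : ∑ n ∈ Finset.Icc 1 N, ((-1 : ℝ) ^ (n - 1) / n) * (y ^ n) ω
      = (aeval x ((LP N).comp (EP N - 1)) : FA α) ω := by
    rw [aeval_comp]
    have h1 : (aeval x (EP N - 1) : FA α) = y := by
      rw [map_sub, map_one]
    rw [h1]
    unfold LP
    rw [FA.aeval_sum_apply]
  rw [step2]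
  obtain ⟨r, hr⟩ := mainPoly N
  have h2 : (aeval x ((LP N).comp (EP N - 1)) : FA α)
      = x + x ^ (N + 1) * aeval x r := by
    have h3 := congrArg (aeval x (R := ℝ)) hr
    rw [map_sub, aeval_X, map_mul, map_pow, aeval_X] at h3
    have h4 : (aeval x ((LP N).comp (EP N - 1)) : FA α) - x = x ^ (N+1) * aeval x r := h3
    linear_combination h4
  rw [h2, FA.add_apply, FA.mul_apply]
  have h5 : ∑ ω₁ ∈ ω.powerset, (x ^ (N + 1)) ω₁ * (aeval x r : FA α) (ω \ ω₁) = 0 := by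
    refine Finset.sum_eq_zero fun ω₁ h₁ => ?_
    rw [Finset.mem_powerset] at h₁
    rw [hxpow, starPow_eq_zero ψ hψ (N+1) ω₁ (by
      have := Finset.card_le_card h₁; omega), zero_mul]
  rw [h5, add_zero]
end LogExpSec
section ConnSec
variable {α : Type*} [DecidableEq α]

/-- The graph on all of `α` with edge set `G`. -/
def bigG (G : Finset (Sym2 α)) : SimpleGraph α := SimpleGraph.fromEdgeSet (G : Set (Sym2 α))

lemma bigG_adj {G : Finset (Sym2 α)} {a b : α} :
    (bigG G).Adj a b ↔ s(a, b) ∈ G ∧ a ≠ b := by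
  rw [bigG, SimpleGraph.fromEdgeSet_adj, Finset.mem_coe]

lemma bigG_mono {G G' : Finset (Sym2 α)} (h : G ⊆ G') : bigG G ≤ bigG G' := by
  apply SimpleGraph.fromEdgeSet_mono
  exact_mod_cast h

lemma toGraph_adj {ω : Finset α} {G : Finset (Sym2 α)} {a b : {x // x ∈ ω}} :
    (toGraph ω G).Adj a b ↔ s((a : α), (b : α)) ∈ G ∧ (a : α) ≠ (b : α) := by
  rw [toGraph, SimpleGraph.fromEdgeSet_adj]
  constructor
  · rintro ⟨h1, h2⟩
    rw [Set.mem_setOf_eq, Sym2.map_pair_eq] at h1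
    exact ⟨h1, fun hab => h2 (Subtype.ext hab)⟩
  · rintro ⟨h1, h2⟩
    refine ⟨?_, fun hab => h2 (by rw [hab])⟩
    rw [Set.mem_setOf_eq, Sym2.map_pair_eq]
    exact h1

/-- The coercion homomorphism from the subtype graph to the big graph. -/
def toBig (ω : Finset α) (G : Finset (Sym2 α)) : toGraph ω G →g bigG G :=
  ⟨Subtype.val, by
    intro a b h
    rw [toGraph_adj] at h
    exact bigG_adj.mpr h⟩

lemma walk_to_subtype {ω : Finset α} {G : Finset (Sym2 α)} (hG : G ⊆ ω.sym2) :
    ∀ {a b : α}, (bigG G).Walk a b → ∀ (ha : a ∈ ω) (hb : b ∈ ω),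
      (toGraph ω G).Reachable ⟨a, ha⟩ ⟨b, hb⟩ := by
  intro a b p
  induction p with
  | nil =>
    intro ha hb
    exact SimpleGraph.Reachable.refl _
  | @cons a c b h p ih =>
    intro ha hb
    have he : s(a, c) ∈ G := (bigG_adj.mp h).1
    have hc : c ∈ ω := by
      have := hG he
      rw [Finset.mem_sym2_iff] at this
      exact this c (by simp [Sym2.mem_iff])
    have hadj : (toGraph ω G).Adj ⟨a, ha⟩ ⟨c, hc⟩ :=
      toGraph_adj.mpr ⟨he, (bigG_adj.mp h).2⟩
    exact hadj.reachable.trans (ih hc hb)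

lemma toGraph_connected_iff {ω : Finset α} {G : Finset (Sym2 α)} (hG : G ⊆ ω.sym2) :
    (toGraph ω G).Connected ↔
      ω.Nonempty ∧ ∀ a ∈ ω, ∀ b ∈ ω, (bigG G).Reachable a b := by
  constructor
  · intro h
    obtain ⟨⟨v, hv⟩⟩ := h.nonempty
    refine ⟨⟨v, hv⟩, fun a ha b hb => ?_⟩
    have := h.preconnected ⟨a, ha⟩ ⟨b, hb⟩
    exact this.map (toBig ω G)
  · rintro ⟨⟨v, hv⟩, h⟩
    have : Nonempty {x // x ∈ ω} := ⟨⟨v, hv⟩⟩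
    refine SimpleGraph.Connected.mk fun u w => ?_
    have hr := h u.1 u.2 w.1 w.2
    obtain ⟨p⟩ := hr
    have h2 := walk_to_subtype hG p u.2 w.2
    simpa using h2

end ConnSec
section SplitSec
variable {α : Type*} [DecidableEq α]

/-- Edge weight. -/
noncomputable def fEdge (β : ℝ) (φ : α → α → ℝ) (hφ : ∀ x y, φ x y = φ y x) (e : Sym2 α) : ℝ :=
  Real.exp (-β * Sym2.lift ⟨φ, hφ⟩ e) - 1

/-- Edges of the complete graph on `ω`. -/
def EE (ω : Finset α) : Finset (Sym2 α) := ω.sym2.filter (fun e => ¬ e.IsDiag)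

/-- Partition function. -/
noncomputable def ZZ (β : ℝ) (φ : α → α → ℝ) (hφ : ∀ x y, φ x y = φ y x) (ω : Finset α) : ℝ :=
  ∑ G ∈ (EE ω).powerset, ∏ e ∈ G, fEdge β φ hφ e

open Classical in
/-- Connected graphs on `ω`. -/
noncomputable def connSet (ω : Finset α) : Finset (Finset (Sym2 α)) :=
  (graphsOn ω).filter (fun G => (toGraph ω G).Connected)

lemma mem_EE {ω : Finset α} {e : Sym2 α} :
    e ∈ EE ω ↔ (∀ y ∈ e, y ∈ ω) ∧ ¬ e.IsDiag := by
  rw [EE, Finset.mem_filter, Finset.mem_sym2_iff]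

lemma EE_mono {ω₁ ω₂ : Finset α} (h : ω₁ ⊆ ω₂) : EE ω₁ ⊆ EE ω₂ := by
  intro e he
  rw [mem_EE] at he ⊢
  exact ⟨fun y hy => h (he.1 y hy), he.2⟩

lemma graphsOn_eq (ω : Finset α) : graphsOn ω = (EE ω).powerset := by
  ext G
  simp only [graphsOn, EE, Finset.mem_filter, Finset.mem_powerset, Finset.subset_iff]
  constructor
  · intro h e he
    exact ⟨h.1 he, h.2 e he⟩
  · intro h
    exact ⟨fun e he => (h he).1, fun e he => (h he).2⟩

lemma ursell_eq (β : ℝ) (φ : α → α → ℝ) (hφ : ∀ x y, φ x y = φ y x) (ω : Finset α) :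
    ursell β φ hφ ω = ∑ G ∈ connSet ω, ∏ e ∈ G, fEdge β φ hφ e := rfl

lemma mem_connSet {ω : Finset α} {C : Finset (Sym2 α)} :
    C ∈ connSet ω ↔ C ⊆ EE ω ∧ (toGraph ω C).Connected := by
  classical
  unfold connSet
  simp only [Finset.mem_filter, graphsOn_eq, Finset.mem_powerset]

lemma gibbs_eq (β : ℝ) (φ : α → α → ℝ) (hφ : ∀ x y, φ x y = φ y x) (ω : Finset α) :
    gibbs β φ hφ ω = ZZ β φ hφ ω := by
  unfold gibbs energy ZZ
  calc Real.exp (-β * ∑ e ∈ ω.sym2.filter (fun e => ¬ e.IsDiag), Sym2.lift ⟨φ, hφ⟩ e)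
      = ∏ e ∈ EE ω, Real.exp (-β * Sym2.lift ⟨φ, hφ⟩ e) := by
        rw [Finset.mul_sum, Real.exp_sum]; rfl
    _ = ∏ e ∈ EE ω, (fEdge β φ hφ e + 1) := by
        refine Finset.prod_congr rfl fun e _ => ?_
        rw [fEdge]; ring
    _ = ∑ G ∈ (EE ω).powerset, (∏ e ∈ G, fEdge β φ hφ e) * ∏ e ∈ EE ω \ G, 1 := by
        rw [Finset.prod_add]
    _ = _ := by
        refine Finset.sum_congr rfl fun G _ => ?_
        rw [Finset.prod_const_one, mul_one]

/-- The key splitting of the partition function along the connected component of `x`. -/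
lemma splitting (β : ℝ) (φ : α → α → ℝ) (hφ : ∀ x y, φ x y = φ y x)
    (x : α) (ω' : Finset α) (hx : x ∉ ω') :
    ZZ β φ hφ (insert x ω')
      = ∑ ζ ∈ ω'.powerset, ursell β φ hφ (insert x ζ) * ZZ β φ hφ (ω' \ ζ) := by
  classical
  set s := insert x ω' with hs
  have hRHS : ∀ ζ : Finset α, ursell β φ hφ (insert x ζ) * ZZ β φ hφ (ω' \ ζ)
      = ∑ C ∈ connSet (insert x ζ), ∑ H ∈ (EE (ω' \ ζ)).powerset,
          (∏ e ∈ C, fEdge β φ hφ e) * ∏ e ∈ H, fEdge β φ hφ e := by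
    intro ζ
    rw [ursell_eq, ZZ, Finset.sum_mul]
    exact Finset.sum_congr rfl fun C _ => Finset.mul_sum _ _ _
  have hL : ZZ β φ hφ s = ∑ G ∈ (EE s).powerset, ∏ e ∈ G, fEdge β φ hφ e := rfl
  rw [hL, Finset.sum_congr rfl fun ζ _ => hRHS ζ]
  have h1 : ∀ ζ : Finset α,
      (∑ C ∈ connSet (insert x ζ), ∑ H ∈ (EE (ω' \ ζ)).powerset,
        (∏ e ∈ C, fEdge β φ hφ e) * ∏ e ∈ H, fEdge β φ hφ e)
      = ∑ p ∈ (connSet (insert x ζ)).sigma (fun _ => (EE (ω' \ ζ)).powerset),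
          (∏ e ∈ p.1, fEdge β φ hφ e) * ∏ e ∈ p.2, fEdge β φ hφ e :=
    fun ζ => Finset.sum_sigma' _ _ _
  rw [Finset.sum_congr rfl fun ζ _ => h1 ζ]
  rw [Finset.sum_sigma' ω'.powerset
    (fun ζ => (connSet (insert x ζ)).sigma (fun _ => (EE (ω' \ ζ)).powerset))
    (fun ζ p => (∏ e ∈ p.1, fEdge β φ hφ e) * ∏ e ∈ p.2, fEdge β φ hφ e)]
  set R : Finset (Sym2 α) → α → Prop := fun G y => (bigG G).Reachable x y with hR
  refine Finset.sum_bij'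
    (fun G _ => ⟨ω'.filter (R G), G.filter (fun e => ∀ y ∈ e, R G y),
      G.filter (fun e => ¬ ∀ y ∈ e, R G y)⟩)
    (fun q _ => q.2.1 ∪ q.2.2) ?_ ?_ ?_ ?_ ?_
  · -- forward membership
    intro G hG
    rw [Finset.mem_powerset] at hG
    have hGs : ∀ e ∈ G, ∀ y ∈ e, y ∈ s := fun e he => (mem_EE.mp (hG he)).1
    have hGd : ∀ e ∈ G, ¬ e.IsDiag := fun e he => (mem_EE.mp (hG he)).2
    have hF1 : ∀ e, e ∈ G → ∀ y ∈ e, R G y → ∀ z ∈ e, R G z := by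
      intro e
      induction e using Sym2.ind with
      | _ a b =>
        intro he y hy hRy z hz
        have hadj : (bigG G).Adj a b := by
          rw [bigG_adj]
          refine ⟨he, ?_⟩
          have hd := hGd _ he
          rwa [Sym2.mk_isDiag_iff] at hd
        rcases Sym2.mem_iff.mp hy with rfl | rfl <;> rcases Sym2.mem_iff.mp hz with rfl | rfl
        · exact hRy
        · exact hRy.trans hadj.reachable
        · exact hRy.trans hadj.symm.reachable
        · exact hRy
    set ζG := ω'.filter (R G) with hζG
    have hyζ : ∀ y, R G y → y ∈ s → y ∈ insert x ζG := by
      intro y hRy hys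
      rcases Finset.mem_insert.mp hys with rfl | hyω
      · exact Finset.mem_insert_self _ _
      · exact Finset.mem_insert_of_mem (Finset.mem_filter.mpr ⟨hyω, hRy⟩)
    rw [Finset.mem_sigma, Finset.mem_sigma]
    refine ⟨Finset.mem_powerset.mpr (Finset.filter_subset _ _), ?_, ?_⟩
    · rw [mem_connSet]
      have hCsub : G.filter (fun e => ∀ y ∈ e, R G y) ⊆ EE (insert x ζG) := by
        intro e he
        rw [Finset.mem_filter] at he
        rw [mem_EE]
        exact ⟨fun y hy => hyζ y (he.2 y hy) (hGs _ he.1 y hy), hGd _ he.1⟩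
      refine ⟨hCsub, ?_⟩
      have hCsym : G.filter (fun e => ∀ y ∈ e, R G y) ⊆ (insert x ζG).sym2 := by
        intro e he
        rw [Finset.mem_sym2_iff]
        exact (mem_EE.mp (hCsub he)).1
      rw [toGraph_connected_iff hCsym]
      refine ⟨⟨x, Finset.mem_insert_self _ _⟩, ?_⟩
      have hreach : ∀ a ∈ insert x ζG,
          (bigG (G.filter (fun e => ∀ y ∈ e, R G y))).Reachable x a := by
        intro a ha
        rcases Finset.mem_insert.mp ha with rfl | haζ
        · exact SimpleGraph.Reachable.refl _
        · have hRa : R G a := (Finset.mem_filter.mp haζ).2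
          obtain ⟨p⟩ := hRa
          have hedges : ∀ {u v : α} (q : (bigG G).Walk u v), R G u →
              ∀ e ∈ q.edges,
                e ∈ (bigG (G.filter (fun e => ∀ y ∈ e, R G y))).edgeSet := by
            intro u v q
            induction q with
            | nil => intro _ e he; simp at he
            | @cons u c v h q ih =>
              intro hRu e he
              have hec : s(u, c) ∈ G := (bigG_adj.mp h).1
              have hRc : R G c := hRu.trans h.reachable
              rw [SimpleGraph.Walk.edges_cons] at he
              rcases List.mem_cons.mp he with rfl | he2
              · rw [bigG, SimpleGraph.edgeSet_fromEdgeSet, Set.mem_diff]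
                constructor
                · rw [Finset.mem_coe, Finset.mem_filter]
                  refine ⟨hec, ?_⟩
                  intro y hy
                  rcases Sym2.mem_iff.mp hy with rfl | rfl
                  · exact hRu
                  · exact hRc
                · simp only [Sym2.mem_diagSet]
                  exact hGd _ hec
              · exact ih hRc e he2
          exact ⟨p.transfer _ (hedges p (SimpleGraph.Reachable.refl _))⟩
      intro a ha b hb
      exact ((hreach a ha).symm).trans (hreach b hb)
    · rw [Finset.mem_powerset]
      intro e he
      rw [Finset.mem_filter] at he
      have hnone : ∀ y ∈ e, ¬ R G y := by
        intro y hy hRy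
        exact he.2 (hF1 e he.1 y hy hRy)
      rw [mem_EE]
      refine ⟨?_, hGd _ he.1⟩
      intro y hy
      have hys := hGs _ he.1 y hy
      rw [Finset.mem_sdiff]
      rcases Finset.mem_insert.mp hys with rfl | hyω
      · exact absurd (SimpleGraph.Reachable.refl _) (hnone _ hy)
      · exact ⟨hyω, fun hyζ => hnone y hy (Finset.mem_filter.mp hyζ).2⟩
  · -- backward membership
    rintro ⟨ζ, C, H⟩ hq
    rw [Finset.mem_sigma, Finset.mem_sigma] at hq
    obtain ⟨hζ, hC, hH⟩ := hq
    rw [Finset.mem_powerset] at hζ hH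
    rw [mem_connSet] at hC
    rw [Finset.mem_powerset]
    refine Finset.union_subset ?_ ?_
    · exact hC.1.trans (EE_mono (Finset.insert_subset_insert x hζ))
    · exact hH.trans (EE_mono (Finset.sdiff_subset.trans (Finset.subset_insert x ω')))
  · -- left inverse
    intro G hG
    exact Finset.filter_union_filter_not_eq _ G
  · -- right inverse
    rintro ⟨ζ, C, H⟩ hq
    rw [Finset.mem_sigma, Finset.mem_sigma] at hq
    obtain ⟨hζ, hCm, hHm⟩ := hq
    rw [Finset.mem_powerset] at hζ hHm
    rw [mem_connSet] at hCm
    obtain ⟨hCsub, hCconn⟩ := hCm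
    set G := C ∪ H with hGdef
    have hCsym : C ⊆ (insert x ζ).sym2 := by
      intro e he
      rw [Finset.mem_sym2_iff]
      exact (mem_EE.mp (hCsub he)).1
    have hHall : ∀ e ∈ H, ∀ y ∈ e, y ∈ ω' \ ζ := fun e he => (mem_EE.mp (hHm he)).1
    have hconn := (toGraph_connected_iff hCsym).mp hCconn
    have hCreach : ∀ y ∈ insert x ζ, R G y := by
      intro y hy
      have h2 := hconn.2 x (Finset.mem_insert_self _ _) y hy
      exact SimpleGraph.Reachable.mono (bigG_mono Finset.subset_union_left) h2
    have hstay : ∀ {u v : α} (p : (bigG G).Walk u v), u ∈ insert x ζ → v ∈ insert x ζ := by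
      intro u v p
      induction p with
      | nil => exact fun h => h
      | @cons u c v h q ih =>
        intro hu
        have hec : s(u, c) ∈ G := (bigG_adj.mp h).1
        rcases Finset.mem_union.mp hec with hC2 | hH2
        · apply ih
          have h3 := Finset.mem_sym2_iff.mp (hCsym hC2)
          exact h3 c (by simp)
        · exfalso
          have hu' : u ∈ ω' \ ζ := hHall _ hH2 u (by simp)
          rcases Finset.mem_insert.mp hu with rfl | huζ
          · exact hx (Finset.mem_sdiff.mp hu').1
          · exact (Finset.mem_sdiff.mp hu').2 huζ
    have hcompeq : ω'.filter (R G) = ζ := by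
      ext y
      rw [Finset.mem_filter]
      constructor
      · rintro ⟨hyω, hRy⟩
        obtain ⟨p⟩ := hRy
        have h4 := hstay p (Finset.mem_insert_self _ _)
        rcases Finset.mem_insert.mp h4 with rfl | h
        · exact absurd hyω hx
        · exact h
      · intro hyζ
        exact ⟨hζ hyζ, hCreach y (Finset.mem_insert_of_mem hyζ)⟩
    have hnotH : ∀ e ∈ H, ¬ ∀ y ∈ e, R G y := by
      intro e
      induction e using Sym2.ind with
      | _ a b =>
        intro he hall
        have ha : a ∈ ω' \ ζ := hHall _ he a (by simp)
        have hRa : R G a := hall a (by simp)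
        have ha2 : a ∈ ζ := by
          have h5 : a ∈ ω'.filter (R G) :=
            Finset.mem_filter.mpr ⟨(Finset.mem_sdiff.mp ha).1, hRa⟩
          rwa [hcompeq] at h5
        exact (Finset.mem_sdiff.mp ha).2 ha2
    have hCall : ∀ e ∈ C, ∀ y ∈ e, R G y := by
      intro e he y hy
      exact hCreach y (Finset.mem_sym2_iff.mp (hCsym he) y hy)
    have hCeq : G.filter (fun e => ∀ y ∈ e, R G y) = C := by
      rw [hGdef, Finset.filter_union]
      rw [Finset.filter_true_of_mem hCall, Finset.filter_false_of_mem hnotH,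
        Finset.union_empty]
    have hHeq : G.filter (fun e => ¬ ∀ y ∈ e, R G y) = H := by
      rw [hGdef, Finset.filter_union]
      rw [Finset.filter_false_of_mem (fun e he hne => hne (hCall e he)),
        Finset.filter_true_of_mem hnotH, Finset.empty_union]
    simp only [hcompeq, hCeq, hHeq]
  · -- values
    intro G hG
    have hdisj : Disjoint (G.filter (fun e => ∀ y ∈ e, R G y))
        (G.filter (fun e => ¬ ∀ y ∈ e, R G y)) :=
      Finset.disjoint_filter_filter_not G G _
    rw [← Finset.prod_union hdisj, Finset.filter_union_filter_not_eq]

end SplitSec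
section LeibSec
variable {α : Type*} [DecidableEq α]

lemma insert_sdiff_insert' {x : α} {ω ζ : Finset α} (hx : x ∉ ω) :
    insert x ω \ insert x ζ = ω \ ζ := by
  ext y
  by_cases hyx : y = x
  · subst hyx
    simp [hx]
  · simp [hyx, Finset.mem_sdiff, Finset.mem_insert]

lemma starMul_insert (f g : Finset α → ℝ) (x : α) (ω : Finset α) (hx : x ∉ ω) :
    starMul f g (insert x ω)
      = (∑ ζ ∈ ω.powerset, f ζ * g (insert x (ω \ ζ)))
        + ∑ ζ ∈ ω.powerset, f (insert x ζ) * g (ω \ ζ) := by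
  unfold starMul
  rw [Finset.powerset_insert, Finset.sum_union]
  · congr 1
    · refine Finset.sum_congr rfl fun ζ hζ => ?_
      rw [Finset.mem_powerset] at hζ
      rw [Finset.insert_sdiff_of_notMem _ (fun hxζ => hx (hζ hxζ))]
    · rw [Finset.sum_image]
      · refine Finset.sum_congr rfl fun ζ hζ => ?_
        rw [Finset.mem_powerset] at hζ
        rw [insert_sdiff_insert' hx]
      · intro A hA B hB hAB
        rw [Finset.mem_coe, Finset.mem_powerset] at hA hB
        have hxA : x ∉ A := fun h => hx (hA h)
        have hxB : x ∉ B := fun h => hx (hB h)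
        have := congrArg (fun S => Finset.erase S x) hAB
        simpa [Finset.erase_insert, hxA, hxB] using this
  · rw [Finset.disjoint_left]
    intro A hA hA2
    rw [Finset.mem_powerset] at hA
    rw [Finset.mem_image] at hA2
    obtain ⟨B, hB, rfl⟩ := hA2
    exact hx (hA (Finset.mem_insert_self _ _))

lemma sum_powerset_swap (F : Finset α → Finset α → ℝ) (ω : Finset α) :
    ∑ ζ ∈ ω.powerset, ∑ η ∈ (ω \ ζ).powerset, F ζ η
      = ∑ ζ ∈ ω.powerset, ∑ η ∈ (ω \ ζ).powerset, F η ζ := by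
  have hmem : ∀ (p : Finset α × Finset α), p.1 ⊆ ω → p.2 ⊆ ω \ p.1 →
      p.2 ⊆ ω ∧ p.1 ⊆ ω \ p.2 := by
    rintro ⟨ζ, η⟩ h1 h2
    refine ⟨h2.trans Finset.sdiff_subset, ?_⟩
    intro a ha
    rw [Finset.mem_sdiff]
    exact ⟨h1 ha, fun haη => (Finset.mem_sdiff.mp (h2 haη)).2 ha⟩
  rw [Finset.sum_sigma', Finset.sum_sigma']
  refine Finset.sum_bij' (fun p _ => ⟨p.2, p.1⟩) (fun p _ => ⟨p.2, p.1⟩) ?_ ?_ ?_ ?_ ?_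
  · rintro ⟨ζ, η⟩ hp
    simp only [Finset.mem_sigma, Finset.mem_powerset] at hp ⊢
    exact hmem ⟨ζ, η⟩ hp.1 hp.2
  · rintro ⟨ζ, η⟩ hp
    simp only [Finset.mem_sigma, Finset.mem_powerset] at hp ⊢
    exact hmem ⟨ζ, η⟩ hp.1 hp.2
  · rintro ⟨ζ, η⟩ _; rfl
  · rintro ⟨ζ, η⟩ _; rfl
  · rintro ⟨ζ, η⟩ _; rfl

lemma starPow_insert (ψ : Finset α → ℝ) (x : α) :
    ∀ (n : ℕ) (ω : Finset α), x ∉ ω →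
      starPow ψ (n + 1) (insert x ω)
        = ((n : ℝ) + 1) * ∑ ζ ∈ ω.powerset, ψ (insert x ζ) * starPow ψ n (ω \ ζ) := by
  intro n
  induction n with
  | zero =>
    intro ω hω
    show starMul ψ (starPow ψ 0) (insert x ω) = _
    rw [starMul_insert _ _ _ _ hω]
    have h1 : ∑ ζ ∈ ω.powerset, ψ ζ * starPow ψ 0 (insert x (ω \ ζ)) = 0 := by
      refine Finset.sum_eq_zero fun ζ _ => ?_
      have : starPow ψ 0 (insert x (ω \ ζ)) = 0 := by
        show starUnit _ = 0
        rw [starUnit]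
        simp [Finset.insert_ne_empty]
      rw [this, mul_zero]
    rw [h1, zero_add]
    push_cast
    ring
  | succ n ih =>
    intro ω hω
    show starMul ψ (starPow ψ (n + 1)) (insert x ω) = _
    rw [starMul_insert _ _ _ _ hω]
    have hterm2 : ∑ ζ ∈ ω.powerset, ψ ζ * starPow ψ (n + 1) (insert x (ω \ ζ))
        = ((n : ℝ) + 1) * ∑ ζ ∈ ω.powerset, ψ (insert x ζ) * starPow ψ (n + 1) (ω \ ζ) := by
      have hstep : ∀ ζ ∈ ω.powerset, ψ ζ * starPow ψ (n + 1) (insert x (ω \ ζ))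
          = ∑ η ∈ (ω \ ζ).powerset,
              ((n : ℝ) + 1) * (ψ ζ * (ψ (insert x η) * starPow ψ n ((ω \ ζ) \ η))) := by
        intro ζ hζ
        rw [Finset.mem_powerset] at hζ
        have hxζ : x ∉ ω \ ζ := fun h => hω (Finset.mem_sdiff.mp h).1
        rw [ih _ hxζ, Finset.mul_sum]
        rw [Finset.mul_sum]
        refine Finset.sum_congr rfl fun η _ => ?_
        ring
      rw [Finset.sum_congr rfl hstep]
      have hswap := sum_powerset_swap
        (fun a b => ((n : ℝ) + 1) * (ψ a * (ψ (insert x b) * starPow ψ n ((ω \ a) \ b)))) ω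
      rw [hswap]
      rw [Finset.mul_sum]
      refine Finset.sum_congr rfl fun ζ hζ => ?_
      rw [Finset.mem_powerset] at hζ
      have hsd : ∀ η, (ω \ η) \ ζ = (ω \ ζ) \ η := by
        intro η
        rw [sdiff_sdiff_left, sdiff_sdiff_left, sup_comm]
      have hpow : starPow ψ (n + 1) (ω \ ζ)
          = ∑ η ∈ (ω \ ζ).powerset, ψ η * starPow ψ n ((ω \ ζ) \ η) := rfl
      rw [hpow, Finset.mul_sum, Finset.mul_sum]
      refine Finset.sum_congr rfl fun η _ => ?_
      rw [hsd η]
      ring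
    rw [hterm2]
    push_cast
    ring

lemma expStar_insert (ψ : Finset α → ℝ) (hψ : ψ ∅ = 0) (x : α) (ω : Finset α) (hx : x ∉ ω) :
    expStar ψ (insert x ω) = ∑ ζ ∈ ω.powerset, ψ (insert x ζ) * expStar ψ (ω \ ζ) := by
  unfold expStar
  rw [Finset.card_insert_of_notMem hx]
  rw [Finset.sum_range_succ'
    (fun n => ((n.factorial : ℝ))⁻¹ * starPow ψ n (insert x ω)) (ω.card + 1)]
  have h0 : starPow ψ 0 (insert x ω) = 0 := by
    show starUnit _ = 0
    rw [starUnit]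
    simp [Finset.insert_ne_empty]
  rw [h0]
  simp only [mul_zero, add_zero]
  have hterm : ∀ m ∈ Finset.range (ω.card + 1),
      (((m + 1).factorial : ℕ) : ℝ)⁻¹ * starPow ψ (m + 1) (insert x ω)
        = ∑ ζ ∈ ω.powerset, ψ (insert x ζ) * ((m.factorial : ℝ)⁻¹ * starPow ψ m (ω \ ζ)) := by
    intro m _
    rw [starPow_insert ψ x m ω hx]
    rw [Finset.mul_sum (ω.powerset) (fun ζ => ψ (insert x ζ) * starPow ψ m (ω \ ζ)) ((m : ℝ) + 1),
      Finset.mul_sum (ω.powerset)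
        (fun ζ => ((m : ℝ) + 1) * (ψ (insert x ζ) * starPow ψ m (ω \ ζ)))
        ((((m + 1).factorial : ℕ) : ℝ)⁻¹)]
    refine Finset.sum_congr rfl fun ζ _ => ?_
    have hfac : ((Nat.factorial (m + 1) : ℕ) : ℝ)⁻¹ * ((m : ℝ) + 1) = ((m.factorial : ℝ))⁻¹ := by
      have h1 : ((Nat.factorial (m+1) : ℕ) : ℝ) = ((m : ℝ) + 1) * (m.factorial : ℝ) := by
        rw [Nat.factorial_succ]; push_cast; ring
      rw [h1, mul_inv]
      have h2 : ((m : ℝ) + 1) ≠ 0 := by positivity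
      have h3 : ((m.factorial : ℝ)) ≠ 0 := Nat.cast_ne_zero.mpr (Nat.factorial_ne_zero m)
      field_simp
    calc (((m + 1).factorial : ℕ) : ℝ)⁻¹ * (((m : ℝ) + 1) * (ψ (insert x ζ) * starPow ψ m (ω \ ζ)))
        = ((((m + 1).factorial : ℕ) : ℝ)⁻¹ * ((m : ℝ) + 1)) * (ψ (insert x ζ) * starPow ψ m (ω \ ζ)) := by
          ring
      _ = _ := by rw [hfac]; ring
  rw [Finset.sum_congr rfl hterm]
  rw [Finset.sum_comm]
  refine Finset.sum_congr rfl fun ζ hζ => ?_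
  rw [Finset.mem_powerset] at hζ
  rw [← Finset.mul_sum]
  congr 1
  have hsub : Finset.range ((ω \ ζ).card + 1) ⊆ Finset.range (ω.card + 1) := by
    apply Finset.range_subset_range.mpr
    have := Finset.card_le_card (Finset.sdiff_subset (s := ω) (t := ζ))
    omega
  refine (Finset.sum_subset hsub fun n hn hn2 => ?_).symm
  rw [Finset.mem_range] at hn hn2
  rw [starPow_eq_zero ψ hψ n (ω \ ζ) (by omega), mul_zero]

end LeibSec

section FinalSec
variable {α : Type*} [DecidableEq α]

lemma ursell_empty (β : ℝ) (φ : α → α → ℝ) (hφ : ∀ x y, φ x y = φ y x) :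
    ursell β φ hφ ∅ = 0 := by
  rw [ursell_eq]
  have h : connSet (∅ : Finset α) = ∅ := by
    rw [Finset.eq_empty_iff_forall_notMem]
    intro C hC
    rw [mem_connSet] at hC
    obtain ⟨⟨v, hv⟩⟩ := hC.2.nonempty
    simp at hv
  rw [h, Finset.sum_empty]

lemma expStar_ursell (β : ℝ) (φ : α → α → ℝ) (hφ : ∀ x y, φ x y = φ y x) :
    ∀ ω : Finset α, expStar (ursell β φ hφ) ω = ZZ β φ hφ ω := by
  intro ω
  induction ω using Finset.strongInduction with
  | _ ω ih =>
    rcases Finset.eq_empty_or_nonempty ω with rfl | ⟨x, hx⟩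
    · simp [expStar, ZZ, EE, starPow, starUnit]
    · obtain ⟨ω', rfl, hxω'⟩ : ∃ ω', ω = insert x ω' ∧ x ∉ ω' :=
        ⟨ω.erase x, (Finset.insert_erase hx).symm, Finset.notMem_erase x ω⟩
      rw [expStar_insert _ (ursell_empty β φ hφ) x ω' hxω', splitting β φ hφ x ω' hxω']
      refine Finset.sum_congr rfl fun ζ hζ => ?_
      congr 1
      apply ih
      exact lt_of_le_of_lt Finset.sdiff_subset (Finset.ssubset_insert hxω')

end FinalSec

/-- The Ursell function `k := ln*(e^{−βE})` has the representation
`k(ω) = Σ_{G connected graph on ω} ∏_{{x,y} ∈ G} (e^{−βφ(x,y)} − 1)` for nonempty `ω`, and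
`k(∅) = 0`.  Equivalently, `exp* k = e^{−βE}`. -/
theorem ursell_representation (β : ℝ) (hβ : 0 < β) (φ : α → α → ℝ)
    (hφ : ∀ x y, φ x y = φ y x) :
    (∀ ω : Finset α, ω ≠ ∅ → lnStar (gibbs β φ hφ) ω = ursell β φ hφ ω) ∧
    lnStar (gibbs β φ hφ) ∅ = 0 ∧ ursell β φ hφ ∅ = 0 ∧
    (∀ ω : Finset α, expStar (ursell β φ hφ) ω = gibbs β φ hφ ω) := by
  have hempty : ursell β φ hφ ∅ = 0 := ursell_empty β φ hφ
  have hexp : ∀ ω : Finset α, expStar (ursell β φ hφ) ω = gibbs β φ hφ ω := by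
    intro ω
    rw [gibbs_eq]
    exact expStar_ursell β φ hφ ω
  have hgfun : gibbs β φ hφ = expStar (ursell β φ hφ) := funext fun ω => (hexp ω).symm
  have hln : ∀ ω : Finset α, lnStar (gibbs β φ hφ) ω = ursell β φ hφ ω := by
    intro ω
    rw [hgfun]
    exact lnStar_expStar _ hempty ω
  exact ⟨fun ω _ => hln ω, (hln ∅).trans hempty, hempty, hexp⟩

end
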